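/- Let T > 0, L ≥ 0 and S̃ ≥ 0, let f : ℝⁿ → ℝⁿ be Lipschitz with constant L, let η : ℝⁿ → ℝⁿ be continuous, and let x, z : [0,T] → ℝⁿ be differentiable with x'(t) = f(x t) + η(x t), z'(t) = f(z t), and z(0) = x(0). Assume k : ℝⁿ → H is continuous and satisfies ‖k a − k b‖ ≤ S̃·‖a − b‖ for all a, b in a set containing the images of x and z. Let Γ_x and Γ_z be the occupation kernels of x and z over [0,T]. Then ‖Γ_x − Γ_z‖² ≤ S̃² · T · ∫₀ᵀ e^{2 L t} ( ∫₀ᵗ e^{−L τ} ‖η(x τ)‖ dτ )² dt. -/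

import Mathlib

open scoped RealInnerProductSpace

/-- Effect of process noise on occupation kernels: with `x' = f(x) + η(x)`,
`z' = f(z)`, `z 0 = x 0`, `f` `L`-Lipschitz, and `k` `S̃`-Lipschitz on a set `Ω`
containing the images of `x` and `z`, the occupation kernels satisfy
`‖Γₓ − Γ_z‖² ≤ S̃² T ∫₀ᵀ e^{2Lt} (∫₀ᵗ e^{−Lτ} ‖η (x τ)‖ dτ)² dt`. -/
theorem process_noise_occupation_kernel_bound
    {n : ℕ} (hn : 1 ≤ n) {H : Type*} [NormedAddCommGroup H] [InnerProductSpace ℝ H]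
    [CompleteSpace H]
    (ι : H →ₗ[ℝ] (EuclideanSpace ℝ (Fin n) → ℝ)) (hι : Function.Injective ι)
    (k : EuclideanSpace ℝ (Fin n) → H)
    (hrep : ∀ (g : H) (x : EuclideanSpace ℝ (Fin n)), ι g x = ⟪g, k x⟫)
    (hk : Continuous k)
    (T L St : ℝ) (hT : 0 < T) (hL : 0 ≤ L) (hSt : 0 ≤ St)
    (f η : EuclideanSpace ℝ (Fin n) → EuclideanSpace ℝ (Fin n))
    (hf : LipschitzWith (Real.toNNReal L) f) (hη : Continuous η)
    (x z : ℝ → EuclideanSpace ℝ (Fin n))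
    (hx : ∀ t ∈ Set.Icc (0:ℝ) T, HasDerivAt x (f (x t) + η (x t)) t)
    (hz : ∀ t ∈ Set.Icc (0:ℝ) T, HasDerivAt z (f (z t)) t)
    (h0 : z 0 = x 0)
    (Ω : Set (EuclideanSpace ℝ (Fin n)))
    (hΩx : ∀ t ∈ Set.Icc (0:ℝ) T, x t ∈ Ω)
    (hΩz : ∀ t ∈ Set.Icc (0:ℝ) T, z t ∈ Ω)
    (hkLip : ∀ a ∈ Ω, ∀ b ∈ Ω, ‖k a - k b‖ ≤ St * ‖a - b‖)
    (Γx Γz : H)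
    (hΓx : ∀ g : H, ⟪g, Γx⟫ = ∫ t in (0:ℝ)..T, ι g (x t))
    (hΓz : ∀ g : H, ⟪g, Γz⟫ = ∫ t in (0:ℝ)..T, ι g (z t)) :
    ‖Γx - Γz‖ ^ 2 ≤ St ^ 2 * T *
      ∫ t in (0:ℝ)..T, Real.exp (2 * L * t) *
        (∫ τ in (0:ℝ)..t, Real.exp (-L * τ) * ‖η (x τ)‖) ^ 2 := by
  have hT' : (0:ℝ) ≤ T := hT.le
  have hIcc : Set.uIcc (0:ℝ) T = Set.Icc 0 T := Set.uIcc_of_le hT'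
  have hxc : ContinuousOn x (Set.Icc 0 T) := fun t ht =>
    ((hx t ht).continuousAt).continuousWithinAt
  have hzc : ContinuousOn z (Set.Icc 0 T) := fun t ht =>
    ((hz t ht).continuousAt).continuousWithinAt
  -- clamp to [0,T]
  set c : ℝ → ℝ := fun t => max 0 (min t T) with hcdef
  have hcmem : ∀ t, c t ∈ Set.Icc (0:ℝ) T := fun t =>
    ⟨le_max_left _ _, max_le hT' (min_le_right _ _)⟩
  have hccont : Continuous c := continuous_const.max (continuous_id.min continuous_const)
  have hceq : ∀ t ∈ Set.Icc (0:ℝ) T, c t = t := fun t ht => by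
    simp only [hcdef]
    rw [min_eq_left ht.2, max_eq_right ht.1]
  set g : ℝ → ℝ := fun τ => Real.exp (-L * τ) * ‖η (x (c τ))‖ with hgdef
  have hgc : Continuous g := by
    apply Continuous.mul
    · exact Real.continuous_exp.comp (continuous_const.mul continuous_id)
    · exact (hη.comp (hxc.comp_continuous hccont hcmem)).norm
  have hgnn : ∀ τ, 0 ≤ g τ := fun τ => mul_nonneg (Real.exp_pos _).le (norm_nonneg _)
  set I : ℝ → ℝ := fun t => ∫ τ in (0:ℝ)..t, g τ with hIdef
  have hI : ∀ t, HasDerivAt I (g t) t := fun t => (hgc.integral_hasStrictDerivAt 0 t).hasDerivAt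
  have hIcont : Continuous I := continuous_iff_continuousAt.2 fun t => (hI t).continuousAt
  have hInn : ∀ t, 0 ≤ t → 0 ≤ I t := fun t ht =>
    intervalIntegral.integral_nonneg ht fun τ _ => hgnn τ
  set B : ℝ → ℝ := fun t => Real.exp (L * t) * I t with hBdef
  have hBd : ∀ t, HasDerivAt B (L * B t + Real.exp (L * t) * g t) t := by
    intro t
    have h1 : HasDerivAt (fun s => Real.exp (L * s)) (Real.exp (L * t) * L) t := by
      simpa [Function.comp_def] using (Real.hasDerivAt_exp (L * t)).comp t ((hasDerivAt_id t).const_mul L)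
    have h2 : HasDerivAt (fun s => Real.exp (L * s) * I s)
        (Real.exp (L * t) * L * I t + Real.exp (L * t) * g t) t := h1.mul (hI t)
    convert h2 using 1
    simp only [hBdef]; ring
  have hBcont : Continuous B := continuous_iff_continuousAt.2 fun t => (hBd t).continuousAt
  have hBnn : ∀ t ∈ Set.Icc (0:ℝ) T, 0 ≤ B t := fun t ht =>
    mul_nonneg (Real.exp_pos _).le (hInn t ht.1)
  have hηg : ∀ t ∈ Set.Icc (0:ℝ) T, Real.exp (L * t) * g t = ‖η (x t)‖ := by
    intro t ht
    simp only [hgdef]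
    rw [hceq t ht, ← mul_assoc, ← Real.exp_add]
    ring_nf
    rw [Real.exp_zero, one_mul]
  -- Grönwall-type bound
  have hkey : ∀ t ∈ Set.Icc (0:ℝ) T, ‖x t - z t‖ ≤ B t := by
    intro t ht
    have main : ∀ ε > (0:ℝ), ‖x t - z t‖ ≤ B t + ε * Real.exp ((L + 1) * t) := by
      intro ε hε
      have hBε : ∀ s, HasDerivAt (fun u => B u + ε * Real.exp ((L + 1) * u))
          (L * B s + Real.exp (L * s) * g s + ε * (Real.exp ((L + 1) * s) * (L + 1))) s := by
        intro s
        have h1 : HasDerivAt (fun u => Real.exp ((L + 1) * u))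
            (Real.exp ((L + 1) * s) * (L + 1)) s := by
          simpa [Function.comp_def] using (Real.hasDerivAt_exp ((L + 1) * s)).comp s
            ((hasDerivAt_id s).const_mul (L + 1))
        exact (hBd s).add (h1.const_mul ε)
      have := image_norm_le_of_norm_deriv_right_lt_deriv_boundary
        (f := fun s => x s - z s) (f' := fun s => f (x s) + η (x s) - f (z s))
        (a := 0) (b := T)
        (hxc.sub hzc)
        (fun s hs => (((hx s (Set.Ico_subset_Icc_self hs)).sub
          (hz s (Set.Ico_subset_Icc_self hs))).hasDerivWithinAt))
        (B := fun u => B u + ε * Real.exp ((L + 1) * u))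
        (B' := fun s => L * B s + Real.exp (L * s) * g s +
          ε * (Real.exp ((L + 1) * s) * (L + 1)))
        (by
          simp only [h0, sub_self, norm_zero, hBdef, hIdef]
          rw [intervalIntegral.integral_same]
          simp
          positivity)
        hBε
        (by
          intro s hs heq
          have hsIcc : s ∈ Set.Icc (0:ℝ) T := Set.Ico_subset_Icc_self hs
          have hlip : ‖f (x s) - f (z s)‖ ≤ L * ‖x s - z s‖ := by
            have h := hf.dist_le_mul (x s) (z s)
            rw [dist_eq_norm, dist_eq_norm] at h
            rwa [Real.coe_toNNReal L hL] at h
          have hE : 0 < Real.exp ((L + 1) * s) := Real.exp_pos _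
          have h1 : ‖f (x s) + η (x s) - f (z s)‖ ≤ L * ‖x s - z s‖ + ‖η (x s)‖ := by
            calc ‖f (x s) + η (x s) - f (z s)‖ = ‖(f (x s) - f (z s)) + η (x s)‖ := by
                  rw [add_sub_right_comm]
              _ ≤ ‖f (x s) - f (z s)‖ + ‖η (x s)‖ := norm_add_le _ _
              _ ≤ L * ‖x s - z s‖ + ‖η (x s)‖ := by linarith
          rw [heq] at h1
          rw [← hηg s hsIcc] at h1
          calc ‖f (x s) + η (x s) - f (z s)‖
              ≤ L * (B s + ε * Real.exp ((L + 1) * s)) + Real.exp (L * s) * g s := h1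
            _ < L * B s + Real.exp (L * s) * g s + ε * (Real.exp ((L + 1) * s) * (L + 1)) := by
                nlinarith [mul_pos hε hE])
      exact this ht
    refine le_of_forall_pos_le_add fun δ hδ => ?_
    have hE : 0 < Real.exp ((L + 1) * t) := Real.exp_pos _
    have := main (δ / Real.exp ((L + 1) * t)) (by positivity)
    rwa [div_mul_cancel₀ _ hE.ne'] at this
  -- occupation kernel estimate
  set Γ : H := Γx - Γz with hΓdef
  have hcx : ContinuousOn (fun t => ⟪Γ, k (x t)⟫) (Set.Icc 0 T) :=
    (continuous_const.inner hk).comp_continuousOn hxc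
  have hcz : ContinuousOn (fun t => ⟪Γ, k (z t)⟫) (Set.Icc 0 T) :=
    (continuous_const.inner hk).comp_continuousOn hzc
  have hintx : IntervalIntegrable (fun t => ⟪Γ, k (x t)⟫) MeasureTheory.volume 0 T :=
    (hcx.mono (le_of_eq hIcc)).intervalIntegrable
  have hintz : IntervalIntegrable (fun t => ⟪Γ, k (z t)⟫) MeasureTheory.volume 0 T :=
    (hcz.mono (le_of_eq hIcc)).intervalIntegrable
  have hΓΓ : ⟪Γ, Γ⟫ = ∫ t in (0:ℝ)..T, (⟪Γ, k (x t)⟫ - ⟪Γ, k (z t)⟫) := by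
    rw [hΓdef]
    rw [inner_sub_right, hΓx (Γx - Γz), hΓz (Γx - Γz)]
    simp only [hrep]
    rw [← intervalIntegral.integral_sub hintx hintz]
  set C : ℝ := ∫ t in (0:ℝ)..T, B t with hCdef
  have hBint : IntervalIntegrable B MeasureTheory.volume 0 T := hBcont.intervalIntegrable _ _
  have hCnn : 0 ≤ C := intervalIntegral.integral_nonneg hT' fun t ht => hBnn t ht
  have hmain : ‖Γ‖ ^ 2 ≤ ‖Γ‖ * St * C := by
    rw [← real_inner_self_eq_norm_sq, hΓΓ]
    have h1 : (∫ t in (0:ℝ)..T, (⟪Γ, k (x t)⟫ - ⟪Γ, k (z t)⟫)) ≤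
        ∫ t in (0:ℝ)..T, ‖Γ‖ * St * B t := by
      apply intervalIntegral.integral_mono_on hT' (hintx.sub hintz)
        ((hBint.const_mul _))
      intro t ht
      have h2 : ⟪Γ, k (x t)⟫ - ⟪Γ, k (z t)⟫ = ⟪Γ, k (x t) - k (z t)⟫ := by
        rw [inner_sub_right]
      rw [h2]
      calc ⟪Γ, k (x t) - k (z t)⟫ ≤ ‖Γ‖ * ‖k (x t) - k (z t)‖ := real_inner_le_norm _ _
        _ ≤ ‖Γ‖ * (St * ‖x t - z t‖) :=
            mul_le_mul_of_nonneg_left (hkLip _ (hΩx t ht) _ (hΩz t ht)) (norm_nonneg _)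
        _ ≤ ‖Γ‖ * (St * B t) := by
            apply mul_le_mul_of_nonneg_left _ (norm_nonneg _)
            exact mul_le_mul_of_nonneg_left (hkey t ht) hSt
        _ = ‖Γ‖ * St * B t := by ring
    calc (∫ t in (0:ℝ)..T, (⟪Γ, k (x t)⟫ - ⟪Γ, k (z t)⟫))
        ≤ ∫ t in (0:ℝ)..T, ‖Γ‖ * St * B t := h1
      _ = ‖Γ‖ * St * C := by rw [intervalIntegral.integral_const_mul]
  -- Cauchy–Schwarz on [0,T]
  set D : ℝ := ∫ t in (0:ℝ)..T, B t ^ 2 with hDdef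
  have hB2int : IntervalIntegrable (fun t => B t ^ 2) MeasureTheory.volume 0 T :=
    (hBcont.pow 2).intervalIntegrable _ _
  have hCS : C ^ 2 ≤ T * D := by
    have h0' : (0:ℝ) ≤ ∫ t in (0:ℝ)..T, (B t - C / T) ^ 2 :=
      intervalIntegral.integral_nonneg hT' fun t _ => sq_nonneg _
    have hexp : (∫ t in (0:ℝ)..T, (B t - C / T) ^ 2) =
        D - 2 * (C / T) * C + (C / T) ^ 2 * T := by
      have heq : ∀ t, (B t - C / T) ^ 2 = B t ^ 2 - 2 * (C / T) * B t + (C / T) ^ 2 :=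
        fun t => by ring
      simp_rw [heq]
      rw [intervalIntegral.integral_add (hB2int.sub (hBint.const_mul _))
        intervalIntegrable_const]
      rw [intervalIntegral.integral_sub hB2int (hBint.const_mul _)]
      rw [intervalIntegral.integral_const_mul, intervalIntegral.integral_const]
      simp only [smul_eq_mul, sub_zero, hCdef, hDdef]
      ring
    rw [hexp] at h0'
    have hc : C / T * T = C := div_mul_cancel₀ C hT.ne'
    nlinarith [h0', hT, sq_nonneg (C / T)]
  -- identify D with the target integral
  have hDeq : D = ∫ t in (0:ℝ)..T, Real.exp (2 * L * t) *
      (∫ τ in (0:ℝ)..t, Real.exp (-L * τ) * ‖η (x τ)‖) ^ 2 := by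
    apply intervalIntegral.integral_congr
    intro t ht
    rw [hIcc] at ht
    have hIt : I t = ∫ τ in (0:ℝ)..t, Real.exp (-L * τ) * ‖η (x τ)‖ := by
      apply intervalIntegral.integral_congr
      intro τ hτ
      rw [Set.uIcc_of_le ht.1] at hτ
      have hτIcc : τ ∈ Set.Icc (0:ℝ) T := ⟨hτ.1, hτ.2.trans ht.2⟩
      simp only [hgdef]
      rw [hceq τ hτIcc]
    simp only [hBdef]
    rw [mul_pow, sq (Real.exp (L * t)), ← Real.exp_add, hIt]
    ring_nf
  -- conclude
  have hRHSnn : 0 ≤ St ^ 2 * T * ∫ t in (0:ℝ)..T, Real.exp (2 * L * t) *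
      (∫ τ in (0:ℝ)..t, Real.exp (-L * τ) * ‖η (x τ)‖) ^ 2 := by
    apply mul_nonneg (mul_nonneg (sq_nonneg _) hT')
    exact intervalIntegral.integral_nonneg hT' fun t _ => by positivity
  rcases eq_or_lt_of_le (norm_nonneg Γ) with hΓ0 | hΓ0
  · rw [← hΓ0]
    simpa using hRHSnn
  · have hΓle : ‖Γ‖ ≤ St * C := by
      have := hmain
      rw [pow_two] at this
      have h2 : ‖Γ‖ * ‖Γ‖ ≤ ‖Γ‖ * (St * C) := by linarith [hmain]
      exact le_of_mul_le_mul_left h2 hΓ0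
    calc ‖Γx - Γz‖ ^ 2 = ‖Γ‖ ^ 2 := rfl
      _ ≤ (St * C) ^ 2 := by
          apply sq_le_sq' _ hΓle
          linarith [norm_nonneg Γ, mul_nonneg hSt hCnn]
      _ = St ^ 2 * C ^ 2 := by ring
      _ ≤ St ^ 2 * (T * D) := mul_le_mul_of_nonneg_left hCS (sq_nonneg _)
      _ = St ^ 2 * T * D := by ring
      _ = _ := by rw [hDeq]
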